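/- Let H be a finite tree and let (c, c') be an edge of H. Let G be a bipartite simple graph with bipartition (V, V'), and let σ be a homomorphism from G to H such that σ(v) is a neighbour of c' in H for every v ∈ V, and σ(v') is a neighbour of c in H for every v' ∈ V'. Then the set I = {v ∈ V : σ(v) ≠ c} ∪ {v' ∈ V' : σ(v') ≠ c'} is an independent set of G. -/

import Mathlib

/-!
STATEMENT 15: Let `H` be a finite tree with edge `(c, c')`, `G` a bipartite simple
graph with bipartition `(S, Sᶜ)`, and `σ : G → H` a homomorphism mapping every
vertex of `S` to a neighbour of `c'` and every vertex of `Sᶜ` to a neighbour of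
`c`.  Then `I = {v ∈ S : σ v ≠ c} ∪ {v ∉ S : σ v ≠ c'}` is an independent set
of `G`.
-/

lemma no4cycle {β : Type*} {H : SimpleGraph β} (hA : H.IsAcyclic)
    {w x y z : β} (h1 : H.Adj w x) (h2 : H.Adj x y) (h3 : H.Adj y z)
    (h4 : H.Adj z w) (hwy : w ≠ y) (hxz : x ≠ z) : False := by
  refine hA (SimpleGraph.Walk.cons h1 (SimpleGraph.Walk.cons h2
      (SimpleGraph.Walk.cons h3 (SimpleGraph.Walk.cons h4 SimpleGraph.Walk.nil)))) ?_
  simp [SimpleGraph.Walk.isCycle_def, SimpleGraph.Walk.isTrail_def, List.Nodup,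
    SimpleGraph.Walk.edges, Sym2.eq_iff, h1.ne, h2.ne, h3.ne, h4.ne,
    h1.ne', h2.ne', h3.ne', h4.ne', hwy, hxz, hwy.symm, hxz.symm]

theorem stmt15 {α β : Type*} [Fintype β] (H : SimpleGraph β) (hT : H.IsTree)
    (c c' : β) (hcc' : H.Adj c c')
    (G : SimpleGraph α) (S : Set α)
    (hbip : ∀ a b : α, G.Adj a b → (a ∈ S ↔ b ∉ S))
    (σ : α → β) (hhom : ∀ a b : α, G.Adj a b → H.Adj (σ a) (σ b))
    (hS : ∀ v ∈ S, H.Adj c' (σ v)) (hS' : ∀ v ∉ S, H.Adj c (σ v)) :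
    ∀ a ∈ ({v | v ∈ S ∧ σ v ≠ c} ∪ {v | v ∉ S ∧ σ v ≠ c'} : Set α),
      ∀ b ∈ ({v | v ∈ S ∧ σ v ≠ c} ∪ {v | v ∉ S ∧ σ v ≠ c'} : Set α),
        ¬ G.Adj a b := by
  have key : ∀ a b : α, G.Adj a b → a ∈ S → σ a ≠ c → b ∉ S → σ b ≠ c' → False := by
    intro a b hab haS hac hbS hbc
    exact no4cycle hT.IsAcyclic hcc' (hS a haS) (hhom a b hab)
      (hS' b hbS).symm (Ne.symm hac) (Ne.symm hbc)
  intro a ha b hb hab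
  have hiff := hbip a b hab
  rcases ha with ⟨haS, hac⟩ | ⟨haS, hac⟩ <;> rcases hb with ⟨hbS, hbc⟩ | ⟨hbS, hbc⟩
  · exact (hiff.mp haS) hbS
  · exact key a b hab haS hac hbS hbc
  · exact key b a hab.symm hbS hbc haS hac
  · exact haS (hiff.mpr hbS)
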